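/- For p > 1 and d ∈ (-1,1), the energy E(κ(d,·), 0) with E(V₁,V₂) = ∫_{-1}^{1} ( (1/2)V₂² + (1/2)(∂_y V₁)²(1-y²) + ((p+1)/(p-1)²)V₁² - (1/(p+1))|V₁|^{p+1} ) ρ dy, ρ(y) = (1-y²)^{2/(p-1)}, is independent of d: E(κ(d,·),0) = E(κ₀, 0) for all d ∈ (-1,1), where κ₀ is the constant function (2(p+1)/(p-1)²)^{1/(p-1)}. -/

import Mathlib

noncomputable def kappa0 (p : ℝ) : ℝ := (2 * (p + 1) / (p - 1) ^ 2) ^ (1 / (p - 1))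

noncomputable def kap (p d y : ℝ) : ℝ :=
  kappa0 p * (1 - d ^ 2) ^ (1 / (p - 1)) / (1 + d * y) ^ (2 / (p - 1))

/-- the energy functional E(V₁,V₂) -/
noncomputable def En (p : ℝ) (V₁ V₂ : ℝ → ℝ) : ℝ :=
  ∫ y in (-1 : ℝ)..1,
    ((1 / 2) * V₂ y ^ 2 + (1 / 2) * (deriv V₁ y) ^ 2 * (1 - y ^ 2)
        + ((p + 1) / (p - 1) ^ 2) * V₁ y ^ 2 - (1 / (p + 1)) * |V₁ y| ^ (p + 1))
      * (1 - y ^ 2) ^ (2 / (p - 1))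

open Real Set MeasureTheory intervalIntegral

/-- the energy integrand of `kap p d` in closed form -/
noncomputable def ell (p d y : ℝ) : ℝ :=
  kappa0 p ^ 2 * (1 - d ^ 2) ^ (2 / (p - 1)) * ((2 / (p - 1)) ^ 2 * d ^ 2 / 2)
      * ((1 - y ^ 2) ^ (2 / (p - 1) + 1) / (1 + d * y) ^ (2 * (2 / (p - 1)) + 2))
    + kappa0 p ^ 2 * (1 - d ^ 2) ^ (2 / (p - 1)) * ((p + 1) / (p - 1) ^ 2)
      * ((1 - y ^ 2) ^ (2 / (p - 1)) / (1 + d * y) ^ (2 * (2 / (p - 1))))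
    - kappa0 p ^ 2 * ((2 / (p - 1)) ^ 2 / 2) * (1 - d ^ 2) ^ (2 / (p - 1) + 1)
      * ((1 - y ^ 2) ^ (2 / (p - 1)) / (1 + d * y) ^ (2 * (2 / (p - 1)) + 2))

/-- the energy integrand of the constant `kappa0 p` in closed form -/
noncomputable def rr (p t : ℝ) : ℝ := kappa0 p ^ 2 * (1 / (p - 1)) * (1 - t ^ 2) ^ (2 / (p - 1))

/-- an exact-derivative correction term -/
noncomputable def GG (p d t : ℝ) : ℝ :=
  -(1 / (p - 1)) * kappa0 p ^ 2 * d * ((1 - t ^ 2) ^ (2 / (p - 1) + 1) / (1 - d * t))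

/-- the derivative of `GG p d` -/
noncomputable def gg (p d t : ℝ) : ℝ :=
  -(1 / (p - 1)) * kappa0 p ^ 2 * d *
    ((-(2 * t) * (2 / (p - 1) + 1) * (1 - t ^ 2) ^ (2 / (p - 1)) * (1 - d * t)
        - (1 - t ^ 2) ^ (2 / (p - 1) + 1) * -d) / (1 - d * t) ^ 2)

lemma kappa0_pos {p : ℝ} (hp : 1 < p) : 0 < kappa0 p :=
  Real.rpow_pos_of_pos (div_pos (by linarith) (pow_pos (by linarith) 2)) _

lemma kappa0_rpow {p : ℝ} (hp : 1 < p) :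
    kappa0 p ^ (p + 1) = kappa0 p ^ 2 * (2 * (p + 1) / (p - 1) ^ 2) := by
  have h : (0:ℝ) < 2 * (p + 1) / (p - 1) ^ 2 := div_pos (by linarith) (pow_pos (by linarith) 2)
  have hp1 : p - 1 ≠ 0 := ne_of_gt (by linarith)
  have e1 : 1 / (p - 1) * (p + 1) = 1 / (p - 1) * 2 + 1 := by
    field_simp
    ring
  calc kappa0 p ^ (p + 1) = (2 * (p + 1) / (p - 1) ^ 2) ^ (1 / (p - 1) * (p + 1)) := by
        rw [kappa0, ← Real.rpow_mul h.le]
    _ = (2 * (p + 1) / (p - 1) ^ 2) ^ (1 / (p - 1) * 2) * (2 * (p + 1) / (p - 1) ^ 2) ^ (1:ℝ) := by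
        rw [e1, Real.rpow_add h]
    _ = kappa0 p ^ 2 * (2 * (p + 1) / (p - 1) ^ 2) := by
        rw [Real.rpow_one, Real.rpow_mul h.le, Real.rpow_two, kappa0]

lemma kap_hasDerivAt {p d : ℝ} {y : ℝ} (hw : 0 < 1 + d * y) :
    HasDerivAt (kap p d)
      ((0 * (1 + d * y) ^ (2 / (p - 1)) - kappa0 p * (1 - d ^ 2) ^ (1 / (p - 1)) * (d * (2 / (p - 1)) * (1 + d * y) ^ (2 / (p - 1) - 1)))
        / ((1 + d * y) ^ (2 / (p - 1))) ^ 2) y := by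
  have h1 : HasDerivAt (fun y : ℝ => 1 + d * y) d y := by
    simpa using ((hasDerivAt_id y).const_mul d).const_add 1
  have h2 : HasDerivAt (fun y : ℝ => (1 + d * y) ^ (2 / (p - 1)))
      (d * (2 / (p - 1)) * (1 + d * y) ^ (2 / (p - 1) - 1)) y :=
    h1.rpow_const (Or.inl hw.ne')
  exact (hasDerivAt_const y (kappa0 p * (1 - d ^ 2) ^ (1 / (p - 1)))).div h2
    (ne_of_gt (Real.rpow_pos_of_pos hw _))

lemma integrand_eq {p d : ℝ} (hp : 1 < p) (hd1 : -1 < d) (hd2 : d < 1) {y : ℝ}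
    (hy : y ∈ Ioo (-1:ℝ) 1) :
    ((1/2) * (0:ℝ)^2 + (1/2) * (deriv (kap p d) y)^2 * (1 - y^2)
        + ((p+1)/(p-1)^2) * (kap p d y)^2 - (1/(p+1)) * |kap p d y|^(p+1))
      * (1 - y^2) ^ (2/(p-1)) = ell p d y := by
  have hp1 : p - 1 ≠ 0 := ne_of_gt (by linarith)
  have hw : 0 < 1 + d * y := by nlinarith [hy.1, hy.2]
  have hu : 0 < 1 - y ^ 2 := by nlinarith [hy.1, hy.2]
  have he : 0 < 1 - d ^ 2 := by nlinarith
  have hK := kappa0_pos hp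
  rw [(kap_hasDerivAt hw).deriv]
  have hkpos : 0 < kap p d y :=
    div_pos (mul_pos hK (Real.rpow_pos_of_pos he _)) (Real.rpow_pos_of_pos hw _)
  rw [abs_of_pos hkpos]
  unfold kap ell
  rw [Real.div_rpow (by positivity) (Real.rpow_pos_of_pos hw _).le,
      Real.mul_rpow hK.le (Real.rpow_pos_of_pos he _).le,
      kappa0_rpow hp, ← Real.rpow_mul he.le, ← Real.rpow_mul hw.le,
      show (2/(p-1))*(p+1) = 2*(2/(p-1)) + 2 by field_simp; ring,
      show (1/(p-1))*(p+1) = 2/(p-1) + 1 by field_simp; ring]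
  have hwq1 : (1+d*y) ^ (2/(p-1)-1) = (1+d*y) ^ (2/(p-1)) * (1+d*y)⁻¹ := by
    rw [show 2/(p-1)-1 = 2/(p-1) + (-1) by ring, Real.rpow_add hw, Real.rpow_neg_one]
  have hu1 : (1-y^2) ^ (2/(p-1)+1) = (1-y^2) ^ (2/(p-1)) * (1-y^2) := by
    rw [Real.rpow_add hu, Real.rpow_one]
  have he1 : (1-d^2) ^ (2/(p-1)+1) = (1-d^2) ^ (1/(p-1)) * (1-d^2) ^ (1/(p-1)) * (1-d^2) := by
    rw [show 2/(p-1)+1 = 1/(p-1) + 1/(p-1) + 1 by ring, Real.rpow_add he, Real.rpow_add he,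
      Real.rpow_one]
  have he2 : (1-d^2) ^ (2/(p-1)) = (1-d^2) ^ (1/(p-1)) * (1-d^2) ^ (1/(p-1)) := by
    rw [show 2/(p-1) = 1/(p-1) + 1/(p-1) by ring, Real.rpow_add he]
  have hw2 : (1+d*y) ^ (2*(2/(p-1))) = (1+d*y) ^ (2/(p-1)) * (1+d*y) ^ (2/(p-1)) := by
    rw [show 2*(2/(p-1)) = 2/(p-1) + 2/(p-1) by ring, Real.rpow_add hw]
  have hw3 : (1+d*y) ^ (2*(2/(p-1))+2) =
      (1+d*y) ^ (2/(p-1)) * (1+d*y) ^ (2/(p-1)) * ((1+d*y) * (1+d*y)) := by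
    rw [show 2*(2/(p-1))+2 = (2/(p-1) + 2/(p-1)) + (1+1) by ring, Real.rpow_add hw,
      Real.rpow_add hw, Real.rpow_add hw, Real.rpow_one]
  rw [hwq1, hu1, he1, he2, hw2, hw3]
  have hWq : (0:ℝ) < (1+d*y) ^ (2/(p-1)) := Real.rpow_pos_of_pos hw _
  field_simp
  ring

lemma ae_ne_one : ∀ᵐ y : ℝ ∂volume, y ≠ 1 := by
  refine ae_iff.2 ?_
  simp [not_ne_iff]

lemma L1 {p d : ℝ} (hp : 1 < p) (hd1 : -1 < d) (hd2 : d < 1) :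
    En p (kap p d) (fun _ => 0) = ∫ y in (-1:ℝ)..1, ell p d y := by
  unfold En
  refine intervalIntegral.integral_congr_ae ?_
  filter_upwards [ae_ne_one] with y hy1 hmem
  rw [Set.uIoc_of_le (by norm_num : (-1:ℝ) ≤ 1)] at hmem
  have hy : y ∈ Ioo (-1:ℝ) 1 := ⟨hmem.1, lt_of_le_of_ne hmem.2 hy1⟩
  exact integrand_eq hp hd1 hd2 hy

lemma ell_contOn {p d : ℝ} (hp : 1 < p) (hd1 : -1 < d) (hd2 : d < 1) :
    ContinuousOn (ell p d) (Icc (-1:ℝ) 1) := by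
  have hq : (0:ℝ) ≤ 2/(p-1) := (div_pos (by norm_num) (by linarith)).le
  intro y hy
  have hw : 0 < 1 + d * y := by
    nlinarith [hy.1, hy.2, sq_nonneg (d - y), sq_nonneg (d + y),
      mul_pos (sub_pos.2 hd2) (by linarith : (0:ℝ) < 1 + d),
      mul_nonneg (by linarith [hy.2] : (0:ℝ) ≤ 1 - y) (by linarith [hy.1] : (0:ℝ) ≤ 1 + y)]
  have hca : ∀ a:ℝ, 0 ≤ a → ContinuousAt (fun y:ℝ => (1-y^2) ^ a) y :=
    fun a ha => ContinuousAt.rpow_const (by fun_prop) (Or.inr ha)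
  have hcw : ∀ a:ℝ, ContinuousAt (fun y:ℝ => (1+d*y) ^ a) y :=
    fun a => ContinuousAt.rpow_const (by fun_prop) (Or.inl hw.ne')
  refine ContinuousAt.continuousWithinAt ?_
  unfold ell
  exact ((continuousAt_const.mul ((hca _ (by linarith)).div (hcw _)
      (ne_of_gt (Real.rpow_pos_of_pos hw _)))).add
    (continuousAt_const.mul ((hca _ hq).div (hcw _)
      (ne_of_gt (Real.rpow_pos_of_pos hw _))))).sub
    (continuousAt_const.mul ((hca _ hq).div (hcw _)
      (ne_of_gt (Real.rpow_pos_of_pos hw _))))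

lemma L2 {p d : ℝ} (hp : 1 < p) (hd1 : -1 < d) (hd2 : d < 1) :
    ∫ y in (-1:ℝ)..1, ell p d y
      = ∫ t in (-1:ℝ)..1, ((1-d^2)/(1-d*t)^2) • ell p d ((t-d)/(1-d*t)) := by
  have huIcc : uIcc (-1:ℝ) 1 = Icc (-1:ℝ) 1 := uIcc_of_le (by norm_num)
  have hv : ∀ x ∈ Icc (-1:ℝ) 1, 0 < 1 - d * x := by
    intro x hx
    nlinarith [hx.1, hx.2, sq_nonneg (d - x), sq_nonneg (d + x),
      mul_pos (sub_pos.2 hd2) (by linarith : (0:ℝ) < 1 + d),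
      mul_nonneg (by linarith [hx.2] : (0:ℝ) ≤ 1 - x) (by linarith [hx.1] : (0:ℝ) ≤ 1 + x)]
  have hder : ∀ x ∈ uIcc (-1:ℝ) 1,
      HasDerivAt (fun t => (t-d)/(1-d*t)) ((1-d^2)/(1-d*x)^2) x := by
    intro x hx
    rw [huIcc] at hx
    have hvx := hv x hx
    have h1 : HasDerivAt (fun t:ℝ => t - d) 1 x := (hasDerivAt_id x).sub_const d
    have h2 : HasDerivAt (fun t:ℝ => 1 - d*t) (-d) x := by
      simpa using ((hasDerivAt_id x).const_mul d).const_sub 1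
    have h3 : HasDerivAt (fun t => (t-d)/(1-d*t)) _ x := h1.div h2 hvx.ne'
    convert h3 using 1
    field_simp
    ring
  have hcont : ContinuousOn (fun x => (1-d^2)/(1-d*x)^2) (uIcc (-1:ℝ) 1) := by
    rw [huIcc]
    exact continuousOn_const.div (by fun_prop)
      (fun x hx => pow_ne_zero 2 (hv x hx).ne')
  have himg : (fun t => (t-d)/(1-d*t)) '' uIcc (-1:ℝ) 1 ⊆ Icc (-1:ℝ) 1 := by
    rw [huIcc]
    rintro _ ⟨x, hx, rfl⟩
    have hvx := hv x hx
    constructor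
    · rw [le_div_iff₀ hvx]
      nlinarith [hx.1, hx.2]
    · rw [div_le_one hvx]
      nlinarith [hx.1, hx.2]
  have key := integral_comp_smul_deriv' (f := fun t => (t-d)/(1-d*t))
    (f' := fun x => (1-d^2)/(1-d*x)^2) (g := ell p d) hder hcont
    ((ell_contOn hp hd1 hd2).mono himg)
  have hm1 : ((-1:ℝ) - d)/(1 - d*(-1)) = -1 := by
    rw [div_eq_iff (hv (-1) (by constructor <;> norm_num)).ne']
    ring
  have hp1 : ((1:ℝ) - d)/(1 - d*1) = 1 := by
    rw [div_eq_iff (hv 1 (by constructor <;> norm_num)).ne']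
    ring
  beta_reduce at key
  rw [hm1, hp1] at key
  exact key.symm

lemma L3 {p d : ℝ} (hp : 1 < p) (hd1 : -1 < d) (hd2 : d < 1) {t : ℝ}
    (ht : t ∈ Ioo (-1:ℝ) 1) :
    ((1-d^2)/(1-d*t)^2) * ell p d ((t-d)/(1-d*t)) = rr p t + gg p d t := by
  have hp1 : p - 1 ≠ 0 := ne_of_gt (by linarith)
  have hu : 0 < 1 - t ^ 2 := by nlinarith [ht.1, ht.2]
  have he : 0 < 1 - d ^ 2 := by nlinarith
  have hv : 0 < 1 - d * t := by nlinarith [ht.1, ht.2]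
  have h1 : 1 - ((t-d)/(1-d*t))^2 = (1-t^2)*(1-d^2)/(1-d*t)^2 := by
    rw [div_pow, eq_div_iff (by positivity), sub_mul, div_mul_cancel₀ _ (by positivity)]
    ring
  have h2 : 1 + d*((t-d)/(1-d*t)) = (1-d^2)/(1-d*t) := by
    field_simp [hv.ne']
    ring
  unfold ell rr gg
  rw [h1, h2]
  have hA : ∀ a:ℝ, ((1-t^2)*(1-d^2)/(1-d*t)^2) ^ a
      = (1-t^2)^a * (1-d^2)^a / ((1-d*t)^a * (1-d*t)^a) := by
    intro a
    rw [Real.div_rpow (by positivity) (by positivity), Real.mul_rpow hu.le he.le,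
      show ((1-d*t)^2 : ℝ) = (1-d*t)*(1-d*t) by ring, Real.mul_rpow hv.le hv.le]
  have hB : ∀ a:ℝ, ((1-d^2)/(1-d*t)) ^ a = (1-d^2)^a / (1-d*t)^a :=
    fun a => Real.div_rpow he.le hv.le a
  simp only [hA, hB]
  have hu1 : (1-t^2) ^ (2/(p-1)+1) = (1-t^2) ^ (2/(p-1)) * (1-t^2) := by
    rw [Real.rpow_add hu, Real.rpow_one]
  have he1 : (1-d^2) ^ (2/(p-1)+1) = (1-d^2) ^ (2/(p-1)) * (1-d^2) := by
    rw [Real.rpow_add he, Real.rpow_one]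
  have hv1 : (1-d*t) ^ (2/(p-1)+1) = (1-d*t) ^ (2/(p-1)) * (1-d*t) := by
    rw [Real.rpow_add hv, Real.rpow_one]
  have he2 : (1-d^2) ^ (2*(2/(p-1))+2) =
      (1-d^2) ^ (2/(p-1)) * (1-d^2) ^ (2/(p-1)) * ((1-d^2) * (1-d^2)) := by
    rw [show 2*(2/(p-1))+2 = (2/(p-1) + 2/(p-1)) + (1+1) by ring, Real.rpow_add he,
      Real.rpow_add he, Real.rpow_add he, Real.rpow_one]
  have hv2 : (1-d*t) ^ (2*(2/(p-1))+2) =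
      (1-d*t) ^ (2/(p-1)) * (1-d*t) ^ (2/(p-1)) * ((1-d*t) * (1-d*t)) := by
    rw [show 2*(2/(p-1))+2 = (2/(p-1) + 2/(p-1)) + (1+1) by ring, Real.rpow_add hv,
      Real.rpow_add hv, Real.rpow_add hv, Real.rpow_one]
  have he3 : (1-d^2) ^ (2*(2/(p-1))) = (1-d^2) ^ (2/(p-1)) * (1-d^2) ^ (2/(p-1)) := by
    rw [show 2*(2/(p-1)) = 2/(p-1) + 2/(p-1) by ring, Real.rpow_add he]
  have hv3 : (1-d*t) ^ (2*(2/(p-1))) = (1-d*t) ^ (2/(p-1)) * (1-d*t) ^ (2/(p-1)) := by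
    rw [show 2*(2/(p-1)) = 2/(p-1) + 2/(p-1) by ring, Real.rpow_add hv]
  rw [hu1, he1, hv1, he2, hv2, he3, hv3]
  have hVq : (0:ℝ) < (1-d*t) ^ (2/(p-1)) := Real.rpow_pos_of_pos hv _
  have hEq : (0:ℝ) < (1-d^2) ^ (2/(p-1)) := Real.rpow_pos_of_pos he _
  field_simp
  ring

lemma GG_hasDeriv {p d : ℝ} (hp : 1 < p) (hd1 : -1 < d) (hd2 : d < 1) :
    ∀ x ∈ uIcc (-1:ℝ) 1, HasDerivAt (GG p d) (gg p d x) x := by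
  intro x hx
  rw [uIcc_of_le (by norm_num : (-1:ℝ) ≤ 1)] at hx
  have hq : (0:ℝ) ≤ 2/(p-1) := (div_pos (by norm_num) (by linarith)).le
  have hv : 0 < 1 - d * x := by
    nlinarith [hx.1, hx.2, sq_nonneg (d - x), sq_nonneg (d + x),
      mul_pos (sub_pos.2 hd2) (by linarith : (0:ℝ) < 1 + d),
      mul_nonneg (by linarith [hx.2] : (0:ℝ) ≤ 1 - x) (by linarith [hx.1] : (0:ℝ) ≤ 1 + x)]
  have h1 : HasDerivAt (fun t:ℝ => 1 - t^2) (-(2*x)) x := by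
    simpa using (hasDerivAt_pow 2 x).const_sub 1
  have h2 : HasDerivAt (fun t:ℝ => (1-t^2) ^ (2/(p-1)+1))
      (-(2*x) * (2/(p-1)+1) * (1-x^2) ^ (2/(p-1)+1-1)) x :=
    h1.rpow_const (Or.inr (by linarith))
  rw [show 2/(p-1)+1-1 = 2/(p-1) by ring] at h2
  have h3 : HasDerivAt (fun t:ℝ => 1 - d*t) (-d) x := by
    simpa using ((hasDerivAt_id x).const_mul d).const_sub 1
  have h4 := h2.div h3 hv.ne'
  exact h4.const_mul (-(1/(p-1)) * kappa0 p ^ 2 * d)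

lemma gg_contOn {p d : ℝ} (hp : 1 < p) (hd1 : -1 < d) (hd2 : d < 1) :
    ContinuousOn (gg p d) (Icc (-1:ℝ) 1) := by
  have hq : (0:ℝ) ≤ 2/(p-1) := (div_pos (by norm_num) (by linarith)).le
  intro x hx
  have hv : 0 < 1 - d * x := by
    nlinarith [hx.1, hx.2, sq_nonneg (d - x), sq_nonneg (d + x),
      mul_pos (sub_pos.2 hd2) (by linarith : (0:ℝ) < 1 + d),
      mul_nonneg (by linarith [hx.2] : (0:ℝ) ≤ 1 - x) (by linarith [hx.1] : (0:ℝ) ≤ 1 + x)]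
  have hca : ∀ a:ℝ, 0 ≤ a → ContinuousAt (fun y:ℝ => (1-y^2) ^ a) x :=
    fun a ha => ContinuousAt.rpow_const (by fun_prop) (Or.inr ha)
  have hq2 : (0:ℝ) ≤ 2/(p-1)+1 := by linarith
  refine ContinuousAt.continuousWithinAt ?_
  unfold gg
  refine continuousAt_const.mul (ContinuousAt.div ?_ (by fun_prop) (pow_ne_zero 2 hv.ne'))
  have c1 : ContinuousAt (fun y:ℝ => -(2*y) * (2/(p-1)+1) * (1-y^2)^(2/(p-1)) * (1-d*y)) x :=
    (((by fun_prop : ContinuousAt (fun y:ℝ => -(2*y)) x).mul continuousAt_const).mul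
      (hca _ hq)).mul (by fun_prop)
  have c2 : ContinuousAt (fun y:ℝ => (1-y^2)^(2/(p-1)+1) * -d) x :=
    (hca _ hq2).mul continuousAt_const
  exact c1.sub c2

lemma rr_cont {p : ℝ} (hp : 1 < p) : Continuous (rr p) := by
  have hq : (0:ℝ) ≤ 2/(p-1) := (div_pos (by norm_num) (by linarith)).le
  unfold rr
  exact continuous_const.mul ((by fun_prop : Continuous fun t:ℝ => 1 - t^2).rpow_const
    (fun x => Or.inr hq))

lemma L4 {p d : ℝ} (hp : 1 < p) (hd1 : -1 < d) (hd2 : d < 1) :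
    ∫ t in (-1:ℝ)..1, gg p d t = 0 := by
  have hq1 : (0:ℝ) < 2/(p-1) + 1 := by
    have := (div_pos (by norm_num : (0:ℝ) < 2) (by linarith : (0:ℝ) < p - 1))
    linarith
  have hint : IntervalIntegrable (gg p d) volume (-1) 1 := by
    have h := gg_contOn hp hd1 hd2
    rw [← uIcc_of_le (by norm_num : (-1:ℝ) ≤ 1)] at h
    exact h.intervalIntegrable
  rw [integral_eq_sub_of_hasDerivAt (GG_hasDeriv hp hd1 hd2) hint]
  have e1 : GG p d 1 = 0 := by
    unfold GG
    rw [show (1:ℝ) - 1^2 = 0 by norm_num, Real.zero_rpow hq1.ne']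
    simp
  have e2 : GG p d (-1) = 0 := by
    unfold GG
    rw [show (1:ℝ) - (-1:ℝ)^2 = 0 by norm_num, Real.zero_rpow hq1.ne']
    simp
  rw [e1, e2]
  ring

lemma L6 {p : ℝ} (hp : 1 < p) :
    En p (fun _ => kappa0 p) (fun _ => 0) = ∫ t in (-1:ℝ)..1, rr p t := by
  unfold En
  refine intervalIntegral.integral_congr (fun y _ => ?_)
  have hK := kappa0_pos hp
  have hp1 : p - 1 ≠ 0 := ne_of_gt (by linarith)
  have hpp : p + 1 ≠ 0 := ne_of_gt (by linarith)
  simp only [deriv_const, abs_of_pos hK, rr, kappa0_rpow hp]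
  field_simp
  ring

theorem energy_independent_of_d (p : ℝ) (hp : 1 < p) (d : ℝ)
    (hd : d ∈ Set.Ioo (-1 : ℝ) 1) :
    En p (kap p d) (fun _ => 0) = En p (fun _ => kappa0 p) (fun _ => 0) := by
  obtain ⟨hd1, hd2⟩ := hd
  have hintrr : IntervalIntegrable (rr p) volume (-1) 1 :=
    (rr_cont hp).intervalIntegrable _ _
  have hintgg : IntervalIntegrable (gg p d) volume (-1) 1 := by
    have h := gg_contOn hp hd1 hd2
    rw [← uIcc_of_le (by norm_num : (-1:ℝ) ≤ 1)] at h
    exact h.intervalIntegrable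
  calc En p (kap p d) (fun _ => 0)
      = ∫ y in (-1:ℝ)..1, ell p d y := L1 hp hd1 hd2
    _ = ∫ t in (-1:ℝ)..1, ((1-d^2)/(1-d*t)^2) • ell p d ((t-d)/(1-d*t)) := L2 hp hd1 hd2
    _ = ∫ t in (-1:ℝ)..1, (rr p t + gg p d t) := by
        refine intervalIntegral.integral_congr_ae ?_
        filter_upwards [ae_ne_one] with t ht1 hmem
        rw [Set.uIoc_of_le (by norm_num : (-1:ℝ) ≤ 1)] at hmem
        have ht : t ∈ Ioo (-1:ℝ) 1 := ⟨hmem.1, lt_of_le_of_ne hmem.2 ht1⟩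
        simpa [smul_eq_mul] using L3 hp hd1 hd2 ht
    _ = (∫ t in (-1:ℝ)..1, rr p t) + ∫ t in (-1:ℝ)..1, gg p d t :=
        intervalIntegral.integral_add hintrr hintgg
    _ = ∫ t in (-1:ℝ)..1, rr p t := by rw [L4 hp hd1 hd2]; ring
    _ = En p (fun _ => kappa0 p) (fun _ => 0) := (L6 hp).symm
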